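/- Let C be a ribbon finite tensor category over a field K with twist θ, and let A be a commutative algebra in C. Decompose A = ⊕_{t∈K^×} A_t where A_t is the generalized eigenobject of θ_A with eigenvalue t. Then this decomposition is a grading of A by the multiplicative group K^×: the multiplication maps A_t ⊗ A_s into A_{ts}. -/

import Mathlib

open CategoryTheory CategoryTheory.MonoidalCategory CategoryTheory.Limits
open CategoryTheory.Preadditive CategoryTheory.Linear

/-- Powers in `End (X ⊗ Y)` of a tensor product of endomorphisms. -/
lemma end_tensor_pow {C : Type} [Category C] [MonoidalCategory C] {X Y : C}
    (u : CategoryTheory.End X) (w : CategoryTheory.End Y)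
    (e : CategoryTheory.End (X ⊗ Y)) (he : e = u ⊗ₘ w) (n : ℕ) :
    e ^ n = (u ^ n) ⊗ₘ (w ^ n) := by
  subst he
  induction n with
  | zero => simp [pow_zero, CategoryTheory.End.one_def, id_tensorHom_id]
  | succ n ih =>
    rw [pow_succ, pow_succ, pow_succ, ih, CategoryTheory.End.mul_def,
      CategoryTheory.End.mul_def, CategoryTheory.End.mul_def, tensorHom_comp_tensorHom]

/-- If `p` intertwines endomorphisms `e` and `w`, so do their powers. -/
lemma comp_pow_intertwine {C : Type} [Category C] {X Y : C} (p : Y ⟶ X)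
    (e : CategoryTheory.End X) (w : CategoryTheory.End Y)
    (h : p ≫ e = w ≫ p) (n : ℕ) : p ≫ (e ^ n) = (w ^ n) ≫ p := by
  induction n with
  | zero => simp [pow_zero, CategoryTheory.End.one_def]
  | succ n ih =>
    rw [pow_succ, pow_succ, CategoryTheory.End.mul_def, CategoryTheory.End.mul_def,
      ← Category.assoc, h, Category.assoc, ih, ← Category.assoc]

/-- Let `C` be a ribbon finite tensor category over a field `K`, with twist
`θ` (a natural automorphism of the identity satisfying
`θ_{X⊗Y} = (θ_X ⊗ θ_Y) ∘ c_{Y,X} ∘ c_{X,Y}`), and let `A` be a commutative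
algebra in `C`.  For `t ∈ K^×` let `A_t ⊆ A` be the generalized eigenobject
of `θ_A` with eigenvalue `t`, i.e. the largest subobject on which
`θ_A − t·id` is nilpotent.  Then the decomposition `A = ⊕_t A_t` is a grading
of `A` by the group `K^×`: the multiplication maps `A_t ⊗ A_s` into
`A_{t·s}`. -/
theorem stmt18 {K : Type} [Field K]
    {C : Type} [Category C] [Abelian C] [Linear K C]
    [MonoidalCategory C] [MonoidalPreadditive C] [MonoidalLinear K C]
    [BraidedCategory C] [RigidCategory C]
    (θ : ∀ X : C, X ⟶ X) (θiso : ∀ X : C, IsIso (θ X))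
    (θnat : ∀ {X Y : C} (f : X ⟶ Y), θ X ≫ f = f ≫ θ Y)
    (θribbon : ∀ X Y : C,
      θ (X ⊗ Y) = (θ X ⊗ₘ θ Y) ≫ (β_ X Y).hom ≫ (β_ Y X).hom)
    (A : Mon C)
    (hcomm : (β_ A.X A.X).hom ≫ A.mon.mul = A.mon.mul)
    (Asub : Kˣ → Subobject A.X)
    (heigen : ∀ t : Kˣ, ∃ (u : CategoryTheory.End ((Asub t) : C)) (n : ℕ),
      u ^ n = 0 ∧ u ≫ (Asub t).arrow = (Asub t).arrow ≫ (θ A.X - (t : K) • 𝟙 A.X))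
    (hmax : ∀ (t : Kˣ) (S : Subobject A.X),
      (∃ (u : CategoryTheory.End (S : C)) (n : ℕ),
        u ^ n = 0 ∧ u ≫ S.arrow = S.arrow ≫ (θ A.X - (t : K) • 𝟙 A.X)) →
      S ≤ Asub t) :
    ∀ t s : Kˣ, ∃ f : ((((Asub t) : C) ⊗ ((Asub s) : C) : C)) ⟶ ((Asub (t * s)) : C),
      f ≫ (Asub (t * s)).arrow = ((Asub t).arrow ⊗ₘ (Asub s).arrow) ≫ A.mon.mul := by
  intro t s
  obtain ⟨ut, nt, hut0, hutc⟩ := heigen t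
  obtain ⟨us, ns, hus0, husc⟩ := heigen s
  set at' : ((Asub t : C)) ⟶ A.X := (Asub t).arrow with hat
  set as' : ((Asub s : C)) ⟶ A.X := (Asub s).arrow with has
  set g : ((Asub t : C) ⊗ (Asub s : C) : C) ⟶ A.X := (at' ⊗ₘ as') ≫ A.mon.mul with hg
  -- multiplication intertwines θ⊗θ and θ
  have h3 : (θ A.X ⊗ₘ θ A.X) ≫ A.mon.mul = A.mon.mul ≫ θ A.X := by
    rw [← θnat A.mon.mul, θribbon]
    simp only [Category.assoc, hcomm]
  -- eigen-equations rewritten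
  have h4 : at' ≫ θ A.X = (ut + (t : K) • 𝟙 _) ≫ at' := by
    have := hutc
    rw [comp_sub, comp_smul, Category.comp_id] at this
    rw [add_comp, smul_comp, Category.id_comp, this]
    abel
  have h5 : as' ≫ θ A.X = (us + (s : K) • 𝟙 _) ≫ as' := by
    have := husc
    rw [comp_sub, comp_smul, Category.comp_id] at this
    rw [add_comp, smul_comp, Category.id_comp, this]
    abel
  set wt : CategoryTheory.End ((Asub t : C)) := ut + (t : K) • 𝟙 _ with hwt
  set ws : CategoryTheory.End ((Asub s : C)) := us + (s : K) • 𝟙 _ with hws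
  have hgθ : g ≫ θ A.X = (wt ⊗ₘ ws) ≫ g := by
    rw [hg, Category.assoc, ← h3, ← Category.assoc, tensorHom_comp_tensorHom, h4, h5,
      ← tensorHom_comp_tensorHom, Category.assoc]
  set v : CategoryTheory.End (((Asub t : C) ⊗ (Asub s : C) : C)) :=
    (wt ⊗ₘ ws) - ((t : K) * (s : K)) • 𝟙 _ with hv
  have hkey : g ≫ (θ A.X - ((t : K) * (s : K)) • 𝟙 A.X) = v ≫ g := by
    rw [hv, comp_sub, sub_comp, hgθ, comp_smul, Category.comp_id, smul_comp,
      Category.id_comp]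
  -- nilpotency of v
  set x : CategoryTheory.End (((Asub t : C) ⊗ (Asub s : C) : C)) := ut ⊗ₘ 𝟙 _ with hx
  set y : CategoryTheory.End (((Asub t : C) ⊗ (Asub s : C) : C)) := (𝟙 _) ⊗ₘ us with hy
  have hxy : Commute x y := by
    show x * y = y * x
    rw [CategoryTheory.End.mul_def, CategoryTheory.End.mul_def, hx, hy,
      tensorHom_comp_tensorHom, tensorHom_comp_tensorHom]
    simp
  have hNx : IsNilpotent x := ⟨nt, by rw [end_tensor_pow ut (𝟙 _) x hx nt, hut0]; exact MonoidalPreadditive.zero_tensor _⟩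
  have hNy : IsNilpotent y := ⟨ns, by rw [end_tensor_pow (𝟙 _) us y hy ns, hus0]; exact MonoidalPreadditive.tensor_zero _⟩
  have hveq : v = y * x + ((s : K) • x + (t : K) • y) := by
    rw [hv, hwt, hws, MonoidalPreadditive.add_tensor, MonoidalPreadditive.tensor_add,
      MonoidalPreadditive.tensor_add, hx, hy,
      CategoryTheory.End.mul_def]
    have e1 : ut ⊗ₘ ((s : K) • 𝟙 ((Asub s : C))) = (s : K) • (ut ⊗ₘ 𝟙 _) := by
      rw [MonoidalCategory.tensorHom_def, MonoidalLinear.whiskerLeft_smul, Linear.comp_smul,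
        ← MonoidalCategory.tensorHom_def]
    have e2 : ((t : K) • 𝟙 ((Asub t : C))) ⊗ₘ us = (t : K) • ((𝟙 _) ⊗ₘ us) := by
      rw [MonoidalCategory.tensorHom_def, MonoidalLinear.smul_whiskerRight, Linear.smul_comp,
        ← MonoidalCategory.tensorHom_def]
    have e3 : ((t : K) • 𝟙 ((Asub t : C))) ⊗ₘ ((s : K) • 𝟙 ((Asub s : C)))
        = ((t : K) * (s : K)) • 𝟙 _ := by
      rw [MonoidalCategory.tensorHom_def, MonoidalLinear.smul_whiskerRight,
        MonoidalLinear.whiskerLeft_smul, Linear.smul_comp, Linear.comp_smul,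
        smul_smul, ← MonoidalCategory.tensorHom_def, id_tensorHom_id]
    have e4 : ut ⊗ₘ us = (ut ⊗ₘ 𝟙 ((Asub s : C))) ≫ ((𝟙 ((Asub t : C))) ⊗ₘ us) := by
      rw [tensorHom_comp_tensorHom]; simp
    rw [e1, e2, e3, e4]
    abel
  have hNv : IsNilpotent v := by
    rw [hveq]
    have h1 : IsNilpotent (y * x) := hxy.symm.isNilpotent_mul_left hNx
    have h2 : IsNilpotent ((s : K) • x) := hNx.smul _
    have h3' : IsNilpotent ((t : K) • y) := hNy.smul _
    have c1 : Commute ((s : K) • x) ((t : K) • y) :=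
      (hxy.smul_left _).smul_right _
    have c2 : Commute (y * x) ((s : K) • x + (t : K) • y) := by
      refine Commute.add_right ?_ ?_
      · exact (Commute.mul_left hxy.symm (Commute.refl x)).smul_right _
      · exact (Commute.mul_left (Commute.refl y) hxy).smul_right _
    exact c2.isNilpotent_add h1 (c1.isNilpotent_add h2 h3')
  obtain ⟨N, hvN⟩ := hNv
  -- the image of g
  set φ : A.X ⟶ A.X := θ A.X - ((t : K) * (s : K)) • 𝟙 A.X with hφ
  have hsq : v ≫ g = g ≫ φ := hkey.symm
  set sq : Arrow.mk g ⟶ Arrow.mk g := Arrow.homMk' v φ hsq with hsqdef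
  set u : CategoryTheory.End ((imageSubobject g : C)) :=
    (imageSubobjectIso g).hom ≫ image.map sq ≫ (imageSubobjectIso g).inv with hu
  have harrow : u ≫ (imageSubobject g).arrow = (imageSubobject g).arrow ≫ φ := by
    rw [hu, ← imageSubobject_arrow g]
    simp only [Category.assoc, imageSubobject_arrow']
    have h := image.map_ι sq
    simp only [hsqdef, Arrow.mk_hom, Arrow.homMk'_right] at h
    simp only [Iso.inv_hom_id_assoc, hsqdef]
    rw [h]
  have hpu : factorThruImageSubobject g ≫ u = v ≫ factorThruImageSubobject g := by
    rw [hu]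
    show (factorThruImage g ≫ (imageSubobjectIso g).inv) ≫ _ = _
    have h := image.factor_map sq
    simp only [hsqdef, Arrow.mk_hom, Arrow.homMk'_left] at h
    simp only [Category.assoc, Iso.inv_hom_id_assoc]
    rw [← Category.assoc, h, Category.assoc]
    rfl
  have huN : u ^ N = 0 := by
    have hp := comp_pow_intertwine (factorThruImageSubobject g) u v hpu N
    rw [hvN, zero_comp] at hp
    have : factorThruImageSubobject g ≫ (u ^ N) = factorThruImageSubobject g ≫ 0 := by
      rw [hp, comp_zero]
    exact (cancel_epi (factorThruImageSubobject g)).mp this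
  have hle : imageSubobject g ≤ Asub (t * s) := by
    refine hmax (t * s) (imageSubobject g) ⟨u, N, huN, ?_⟩
    rw [harrow, hφ, Units.val_mul]
  refine ⟨factorThruImageSubobject g ≫ Subobject.ofLE _ _ hle, ?_⟩
  rw [Category.assoc, Subobject.ofLE_arrow, imageSubobject_arrow_comp]
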